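/- For every integer n ≥ 2, the Radon transform is not injective on the dicyclic group Dic_n of order 4n (Mathlib's QuaternionGroup n, generated by a, b with a^{2n} = e, b² = aⁿ, and a b = b a⁻¹): there exists a nonzero f : Dic_n → ℂ all of whose Radon transforms vanish. -/

import Mathlib

/-- The Radon transform of `f` at `(x, γ)`: the sum of `f` over the geodesic
determined by the homomorphism `γ : C_n → G`, translated by `x`. -/
noncomputable def radonSum {G : Type*} [Group G] {n : ℕ} [NeZero n]
    (f : G → ℂ) (γ : Multiplicative (ZMod n) →* G) (x : G) : ℂ :=
  ∑ t : ZMod n, f (x * γ (Multiplicative.ofAdd t))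

/-- All Radon transforms of `f` (over geodesics of all lengths `n ≥ 2`) vanish. -/
def RadonNull (G : Type*) [Group G] (f : G → ℂ) : Prop :=
  ∀ (n : ℕ) (hn : 2 ≤ n) (γ : Multiplicative (ZMod n) →* G), γ ≠ 1 → ∀ x : G,
    haveI : NeZero n := ⟨by omega⟩
    radonSum f γ x = 0

/-- The Radon transform is injective on `G`. -/
def RadonInjective (G : Type*) [Group G] : Prop :=
  ∀ f : G → ℂ, RadonNull G f → f = 0

/-- auxiliary: a primitive `2n`-th root of unity. -/
noncomputable def dicZeta (n : ℕ) : ℂ :=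
  Complex.exp (2 * Real.pi * Complex.I / ((2 * n : ℕ) : ℂ))

/-- auxiliary: the nonzero function with vanishing Radon transforms. -/
noncomputable def dicF (n : ℕ) : QuaternionGroup n → ℂ
  | .a i => dicZeta n ^ i.val
  | .xa _ => 0

lemma dicZeta_prim (n : ℕ) (hn : 2 ≤ n) : IsPrimitiveRoot (dicZeta n) (2 * n) :=
  Complex.isPrimitiveRoot_exp (2 * n) (by omega)

lemma dicF_mul_a (n : ℕ) (hn : 2 ≤ n) (y : QuaternionGroup n) (i : ZMod (2 * n)) :
    dicF n (y * QuaternionGroup.a i) = dicZeta n ^ i.val * dicF n y := by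
  haveI : NeZero (2 * n) := ⟨by omega⟩
  have hone : dicZeta n ^ (2 * n) = 1 := (dicZeta_prim n hn).pow_eq_one
  cases y with
  | a j =>
    show dicZeta n ^ (j + i).val = _
    rw [ZMod.val_add, ← pow_eq_pow_mod _ hone, pow_add, mul_comm]
    rfl
  | xa j => show (0 : ℂ) = _ * 0; ring

lemma dicZeta_pow_n (n : ℕ) (hn : 2 ≤ n) : dicZeta n ^ n = -1 := by
  have h := (dicZeta_prim n hn).pow_eq_one
  have h2 : dicZeta n ^ n * dicZeta n ^ n = 1 := by
    rw [← pow_add]; rw [two_mul] at h; exact h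
  rcases mul_self_eq_one_iff.mp h2 with h1 | h1
  · exact absurd h1 ((dicZeta_prim n hn).pow_ne_one_of_pos_of_lt (by omega) (by omega))
  · exact h1

lemma radon_shift_zero {G : Type*} [Group G] {m : ℕ} [NeZero m]
    (f : G → ℂ) (γ : Multiplicative (ZMod m) →* G) (x : G) (c : ZMod m) (α : ℂ)
    (hα : α ≠ 1) (h : ∀ y : G, f (y * γ (Multiplicative.ofAdd c)) = α * f y) :
    radonSum f γ x = 0 := by
  have hshift : radonSum f γ x
      = ∑ t : ZMod m, f (x * γ (Multiplicative.ofAdd t) * γ (Multiplicative.ofAdd c)) := by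
    unfold radonSum
    exact (Fintype.sum_equiv (Equiv.addRight c)
      (fun t => f (x * γ (Multiplicative.ofAdd t) * γ (Multiplicative.ofAdd c)))
      (fun t => f (x * γ (Multiplicative.ofAdd t)))
      (fun t => by simp only [Equiv.coe_addRight, ofAdd_add, map_mul, mul_assoc])).symm
  have : radonSum f γ x = α * radonSum f γ x := by
    conv_lhs => rw [hshift]
    simp only [h]
    unfold radonSum
    rw [Finset.mul_sum]
  have h0 : (α - 1) * radonSum f γ x = 0 := by linear_combination -this
  rcases mul_eq_zero.mp h0 with h1 | h1
  · exact absurd (sub_eq_zero.mp h1) hα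
  · exact h1

theorem radon_not_injective_dicyclic (n : ℕ) (hn : 2 ≤ n) :
    ∃ f : QuaternionGroup n → ℂ, f ≠ 0 ∧ RadonNull (QuaternionGroup n) f := by
  haveI : NeZero (2 * n) := ⟨by omega⟩
  haveI : NeZero n := ⟨by omega⟩
  refine ⟨dicF n, ?_, ?_⟩
  · intro h
    have h0 : dicF n (.a 0) = 0 := congrFun h _
    simp [dicF] at h0
  intro m hm γ hγ x
  haveI : NeZero m := ⟨by omega⟩
  set g := γ (Multiplicative.ofAdd 1) with hg
  have hpow : ∀ t : ZMod m, γ (Multiplicative.ofAdd t) = g ^ t.val := by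
    intro t
    rw [hg, ← map_pow, ← ofAdd_nsmul]
    congr 1
    rw [nsmul_eq_mul, mul_one, ZMod.natCast_val, ZMod.cast_id]
  have hg1 : g ≠ 1 := by
    intro h
    apply hγ
    refine MonoidHom.ext fun t => ?_
    rw [show t = Multiplicative.ofAdd (Multiplicative.toAdd t) from rfl, hpow, h, one_pow,
      MonoidHom.one_apply]
  have hgm : g ^ m = 1 := by
    rw [hg, ← map_pow, ← ofAdd_nsmul, nsmul_eq_mul, mul_one, ZMod.natCast_self, ofAdd_zero,
      map_one]
  cases hgi : g with
  | a i =>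
    have hi : i ≠ 0 := by rintro rfl; exact hg1 (by rw [hgi]; rfl)
    refine radon_shift_zero _ _ _ 1 (dicZeta n ^ i.val) ?_ ?_
    · exact (dicZeta_prim n hn).pow_ne_one_of_pos_of_lt (ZMod.val_pos.mpr hi).ne' i.val_lt
    · intro y; rw [← hg, hgi]; exact dicF_mul_a n hn y i
  | xa i =>
    have h4 : orderOf g = 4 := by rw [hgi]; exact QuaternionGroup.orderOf_xa i
    have hdvd : 4 ∣ m := h4 ▸ orderOf_dvd_of_pow_eq_one hgm
    have hm4 : 4 ≤ m := Nat.le_of_dvd (by omega) hdvd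
    refine radon_shift_zero _ _ _ ((2 : ℕ) : ZMod m) (-1) (by norm_num) ?_
    intro y
    have hc : γ (Multiplicative.ofAdd ((2 : ℕ) : ZMod m)) = QuaternionGroup.a (n : ZMod (2 * n)) := by
      rw [hpow, ZMod.val_natCast, Nat.mod_eq_of_lt (by omega), hgi, ← QuaternionGroup.xa_sq]
    rw [hc, dicF_mul_a n hn y, ZMod.val_natCast, Nat.mod_eq_of_lt (by omega), dicZeta_pow_n n hn]
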